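/- arXiv:2405.15819 — 9 statements merged into one kernel-verified Lean document; each statement's English description precedes it below -/
import Mathlib

section
/- Assume A_m ≠ 0 and D_k ≠ 0. Let 𝒜 be the set of triples (X, Y, v) with X, Y ∈ ℂ^{mn×mn}, v ∈ ℂ^m such that the pencil λX+Y is in L₁(A) with right ansatz vector v, and let 𝒟 be the set of triples (P, Q, w) with P, Q ∈ ℂ^{kr×kr}, w ∈ ℂ^k such that λP+Q is in L₁(D) with right ansatz vector w. Then 𝒜 and 𝒟 are ℂ-linear subspaces, and the linear map sending ((X,Y,v),(P,Q,w)) to the pair (𝕏,𝕐) defined by the (mn+kr)×(mn+kr) block matrices 𝕏 = [[X, 0],[0, P]] and 𝕐 = [[Y, −v e_kᵀ ⊗ B],[w e_mᵀ ⊗ C, Q]] is injective; its image is exactly the set of pencils belonging to 𝕃₁(G) (for some ansatz vectors), so 𝕃₁(G) is linearly isomorphic to L₁(A) × L₁(D). -/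
open Matrix Finset

noncomputable section

/-- `Λ_{p-1}(λ) = (λ^{p-1}, …, λ, 1)ᵀ` as a vector in `ℂ^p`. -/
def Lam (p : ℕ) (lam : ℂ) : Fin p → ℂ := fun i => lam ^ (p - 1 - (i : ℕ))

/-- the standard basis vector of `ℂ^a` with a `1` in (0-indexed) position `j`. -/
def eVec (a j : ℕ) : Fin a → ℂ := fun i => if (i : ℕ) = j then 1 else 0

/-- evaluation at `lam` of the matrix polynomial with coefficients `Pc 0, …, Pc d`. -/
def polyEval {d n : ℕ} (Pc : Fin (d + 1) → Matrix (Fin n) (Fin n) ℂ) (lam : ℂ) :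
    Matrix (Fin n) (Fin n) ℂ := ∑ j : Fin (d + 1), lam ^ (j : ℕ) • Pc j

/-- Kronecker product `v ⊗ M` of a column vector `v ∈ ℂ^a` with a matrix `M`. -/
def vKron {a : ℕ} {α β : Type*} (v : Fin a → ℂ) (M : Matrix α β ℂ) :
    Matrix (Fin a × α) β ℂ := fun i j => v i.1 * M i.2 j

/-- Kronecker product `vᵀ ⊗ M` of a row vector with a matrix `M`. -/
def rKron {a : ℕ} {α β : Type*} (v : Fin a → ℂ) (M : Matrix α β ℂ) :
    Matrix α (Fin a × β) ℂ := fun i j => v j.1 * M i j.2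

/-- Kronecker product `v wᵀ ⊗ M`. -/
def oKron {a b : ℕ} {α β : Type*} (v : Fin a → ℂ) (w : Fin b → ℂ) (M : Matrix α β ℂ) :
    Matrix (Fin a × α) (Fin b × β) ℂ := fun i j => v i.1 * w j.1 * M i.2 j.2

/-- the pencil `λX + Y` is in `L₁(P)` with right ansatz vector `v`. -/
def InL1 {d n : ℕ} (Pc : Fin (d + 1) → Matrix (Fin n) (Fin n) ℂ)
    (X Y : Matrix (Fin d × Fin n) (Fin d × Fin n) ℂ) (v : Fin d → ℂ) : Prop :=
  ∀ lam : ℂ, (lam • X + Y) * vKron (Lam d lam) (1 : Matrix (Fin n) (Fin n) ℂ)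
      = vKron v (polyEval Pc lam)

/-- the pencil `λX + Y` is in `L₂(P)` with left ansatz vector `s`. -/
def InL2 {d n : ℕ} (Pc : Fin (d + 1) → Matrix (Fin n) (Fin n) ℂ)
    (X Y : Matrix (Fin d × Fin n) (Fin d × Fin n) ℂ) (s : Fin d → ℂ) : Prop :=
  ∀ lam : ℂ, rKron (Lam d lam) (1 : Matrix (Fin n) (Fin n) ℂ) * (lam • X + Y)
      = rKron s (polyEval Pc lam)

/-- the pencil `λ𝕏 + 𝕐` is in `𝕃₁(G)` with ansatz vectors `(v, w)`. -/
def InBL1 {m k n r : ℕ} (Ac : Fin (m + 1) → Matrix (Fin n) (Fin n) ℂ)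
    (Dc : Fin (k + 1) → Matrix (Fin r) (Fin r) ℂ)
    (B : Matrix (Fin n) (Fin r) ℂ) (C : Matrix (Fin r) (Fin n) ℂ)
    (XX YY : Matrix ((Fin m × Fin n) ⊕ (Fin k × Fin r)) ((Fin m × Fin n) ⊕ (Fin k × Fin r)) ℂ)
    (v : Fin m → ℂ) (w : Fin k → ℂ) : Prop :=
  ∃ (X Y : Matrix (Fin m × Fin n) (Fin m × Fin n) ℂ)
    (P Q : Matrix (Fin k × Fin r) (Fin k × Fin r) ℂ),
      InL1 Ac X Y v ∧ InL1 Dc P Q w ∧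
      XX = Matrix.fromBlocks X 0 0 P ∧
      YY = Matrix.fromBlocks Y (-(oKron v (eVec k (k - 1)) B)) (oKron w (eVec m (m - 1)) C) Q

/-- the pencil `λ𝕏 + 𝕐` is in `𝕃₂(G)` with ansatz vectors `(s, z)`. -/
def InBL2 {m k n r : ℕ} (Ac : Fin (m + 1) → Matrix (Fin n) (Fin n) ℂ)
    (Dc : Fin (k + 1) → Matrix (Fin r) (Fin r) ℂ)
    (B : Matrix (Fin n) (Fin r) ℂ) (C : Matrix (Fin r) (Fin n) ℂ)
    (XX YY : Matrix ((Fin m × Fin n) ⊕ (Fin k × Fin r)) ((Fin m × Fin n) ⊕ (Fin k × Fin r)) ℂ)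
    (s : Fin m → ℂ) (z : Fin k → ℂ) : Prop :=
  ∃ (X Y : Matrix (Fin m × Fin n) (Fin m × Fin n) ℂ)
    (P Q : Matrix (Fin k × Fin r) (Fin k × Fin r) ℂ),
      InL2 Ac X Y s ∧ InL2 Dc P Q z ∧
      XX = Matrix.fromBlocks X 0 0 P ∧
      YY = Matrix.fromBlocks Y (-(oKron (eVec m (m - 1)) z B)) (oKron (eVec k (k - 1)) s C) Q

/-- the transfer function `G(λ) = D(λ) + C A(λ)⁻¹ B`. -/
def Gmat {m k n r : ℕ} (Ac : Fin (m + 1) → Matrix (Fin n) (Fin n) ℂ)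
    (Dc : Fin (k + 1) → Matrix (Fin r) (Fin r) ℂ)
    (B : Matrix (Fin n) (Fin r) ℂ) (C : Matrix (Fin r) (Fin n) ℂ) (lam : ℂ) :
    Matrix (Fin r) (Fin r) ℂ :=
  polyEval Dc lam + C * (polyEval Ac lam)⁻¹ * B

/-- a triple `(X, Y, v)` representing a candidate pencil `λX + Y` with ansatz vector `v`. -/
abbrev Trip (d n : ℕ) :=
  Matrix (Fin d × Fin n) (Fin d × Fin n) ℂ ×
    Matrix (Fin d × Fin n) (Fin d × Fin n) ℂ × (Fin d → ℂ)

/-- the map sending `((X, Y, v), (P, Q, w))` to the block pencil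
`(𝕏, 𝕐) = ([[X,0],[0,P]], [[Y, −v e_kᵀ ⊗ B],[w e_mᵀ ⊗ C, Q]])`. -/
def PsiMap {m k n r : ℕ} (B : Matrix (Fin n) (Fin r) ℂ) (C : Matrix (Fin r) (Fin n) ℂ)
    (t : Trip m n × Trip k r) :
    Matrix ((Fin m × Fin n) ⊕ (Fin k × Fin r)) ((Fin m × Fin n) ⊕ (Fin k × Fin r)) ℂ ×
      Matrix ((Fin m × Fin n) ⊕ (Fin k × Fin r)) ((Fin m × Fin n) ⊕ (Fin k × Fin r)) ℂ :=
  (Matrix.fromBlocks t.1.1 0 0 t.2.1,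
   Matrix.fromBlocks t.1.2.1 (-(oKron t.1.2.2 (eVec k (k - 1)) B))
     (oKron t.2.2.2 (eVec m (m - 1)) C) t.2.2.1)

-- auxiliary lemmas to be inserted before stmt1

section Aux

variable {d n : ℕ}

lemma vKron_add {a : ℕ} (v v' : Fin a → ℂ) (M : Matrix (Fin n) (Fin n) ℂ) :
    vKron (v + v') M = vKron v M + vKron v' M := by
  ext i j; simp [vKron]; ring

lemma vKron_smul {a : ℕ} (c : ℂ) (v : Fin a → ℂ) (M : Matrix (Fin n) (Fin n) ℂ) :
    vKron (c • v) M = c • vKron v M := by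
  ext i j; simp [vKron]; ring

lemma vKron_zero {a : ℕ} (M : Matrix (Fin n) (Fin n) ℂ) :
    vKron (0 : Fin a → ℂ) M = 0 := by
  ext i j; simp [vKron]

/-- `L₁` as a submodule of triples. -/
def L1Sub (Pc : Fin (d + 1) → Matrix (Fin n) (Fin n) ℂ) : Submodule ℂ (Trip d n) where
  carrier := {t | InL1 Pc t.1 t.2.1 t.2.2}
  zero_mem' := by
    intro lam
    simp [InL1, vKron_zero]
  add_mem' := by
    rintro ⟨X, Y, v⟩ ⟨X', Y', v'⟩ h h' lam
    have h1 := h lam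
    have h2 := h' lam
    simp only [Prod.fst_add, Prod.snd_add] at h1 h2 ⊢
    have : lam • (X + X') + (Y + Y') = (lam • X + Y) + (lam • X' + Y') := by
      rw [smul_add]; abel
    rw [this, Matrix.add_mul, h1, h2, vKron_add]
  smul_mem' := by
    rintro c ⟨X, Y, v⟩ h lam
    have h1 := h lam
    simp only [Prod.smul_fst, Prod.smul_snd] at h1 ⊢
    have : lam • (c • X) + c • Y = c • (lam • X + Y) := by
      rw [smul_add, smul_comm]
    rw [this, Matrix.smul_mul, h1, vKron_smul]

lemma ansatz_unique (Pc : Fin (d + 1) → Matrix (Fin n) (Fin n) ℂ)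
    (hP : Pc (Fin.last d) ≠ 0)
    {X Y : Matrix (Fin d × Fin n) (Fin d × Fin n) ℂ} {v v' : Fin d → ℂ}
    (h : InL1 Pc X Y v) (h' : InL1 Pc X Y v') : v = v' := by
  -- pick a nonzero entry of the leading coefficient
  obtain ⟨a, b, hab⟩ : ∃ a b, Pc (Fin.last d) a b ≠ 0 := by
    by_contra hc
    push_neg at hc
    exact hP (by ext a b; simp [hc])
  -- a scalar polynomial
  set q : Polynomial ℂ := ∑ j : Fin (d + 1), Polynomial.C (Pc j a b) * Polynomial.X ^ (j : ℕ)
    with hq_def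
  have hq_eval : ∀ lam : ℂ, q.eval lam = polyEval Pc lam a b := by
    intro lam
    rw [hq_def, Polynomial.eval_finset_sum, polyEval, Matrix.sum_apply]
    refine Finset.sum_congr rfl fun j _ => ?_
    rw [Polynomial.eval_mul, Polynomial.eval_C, Polynomial.eval_pow, Polynomial.eval_X,
      Matrix.smul_apply, smul_eq_mul, mul_comm]
  have hq_coeff : q.coeff d = Pc (Fin.last d) a b := by
    rw [hq_def, Polynomial.finset_sum_coeff]
    rw [Finset.sum_eq_single (Fin.last d)]
    · simp [Polynomial.coeff_C_mul, Polynomial.coeff_X_pow]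
    · intro j _ hj
      have hjd : (j : ℕ) ≠ d := by
        intro hc
        exact hj (Fin.ext (by simp [hc]))
      simp [Polynomial.coeff_C_mul, Polynomial.coeff_X_pow, Ne.symm hjd]
    · simp
  have hq_ne : q ≠ 0 := fun hc => hab (by rw [← hq_coeff, hc, Polynomial.coeff_zero])
  obtain ⟨lam, hlam⟩ : ∃ lam : ℂ, polyEval Pc lam a b ≠ 0 := by
    by_contra hc
    push_neg at hc
    exact hq_ne (Polynomial.zero_of_eval_zero q fun x => (hq_eval x).trans (hc x))
  funext i
  have key := (h lam).symm.trans (h' lam)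
  have := congrFun (congrFun key (i, a)) b
  simp only [vKron] at this
  exact mul_right_cancel₀ hlam this

end Aux

section Main

variable {m k n r : ℕ}

/-- `PsiMap` as a linear map. -/
def psiLin (B : Matrix (Fin n) (Fin r) ℂ) (C : Matrix (Fin r) (Fin n) ℂ) :
    (Trip m n × Trip k r) →ₗ[ℂ]
      (Matrix ((Fin m × Fin n) ⊕ (Fin k × Fin r)) ((Fin m × Fin n) ⊕ (Fin k × Fin r)) ℂ ×
       Matrix ((Fin m × Fin n) ⊕ (Fin k × Fin r)) ((Fin m × Fin n) ⊕ (Fin k × Fin r)) ℂ) where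
  toFun := PsiMap B C
  map_add' t t' := by
    refine Prod.ext ?_ ?_ <;>
    · ext i j
      rcases i with i | i <;> rcases j with j | j <;>
        simp [PsiMap, Matrix.fromBlocks, oKron] <;> ring
  map_smul' c t := by
    refine Prod.ext ?_ ?_ <;>
    · ext i j
      rcases i with i | i <;> rcases j with j | j <;>
        simp [PsiMap, Matrix.fromBlocks, oKron] <;> ring

end Main

/-- with `A_m ≠ 0`, `D_k ≠ 0`, the sets `𝒜 = L₁(A)` and `𝒟 = L₁(D)` (of triples
`(X, Y, v)` resp. `(P, Q, w)`) are subspaces, the block-assembly map `Ψ` is injective on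
`𝒜 × 𝒟`, its image is exactly the set of pencils in `𝕃₁(G)`, and consequently `𝕃₁(G)` is
linearly isomorphic to `L₁(A) × L₁(D)`. -/
theorem stmt1 {m k n r : ℕ} (hm : 1 ≤ m) (hk : 1 ≤ k) (hn : 1 ≤ n) (hr : 1 ≤ r)
    (Ac : Fin (m + 1) → Matrix (Fin n) (Fin n) ℂ)
    (Dc : Fin (k + 1) → Matrix (Fin r) (Fin r) ℂ)
    (B : Matrix (Fin n) (Fin r) ℂ) (C : Matrix (Fin r) (Fin n) ℂ)
    (hA : Ac (Fin.last m) ≠ 0) (hD : Dc (Fin.last k) ≠ 0) :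
    ∃ (SA : Submodule ℂ (Trip m n)) (SD : Submodule ℂ (Trip k r))
      (SG : Submodule ℂ
        (Matrix ((Fin m × Fin n) ⊕ (Fin k × Fin r)) ((Fin m × Fin n) ⊕ (Fin k × Fin r)) ℂ ×
         Matrix ((Fin m × Fin n) ⊕ (Fin k × Fin r)) ((Fin m × Fin n) ⊕ (Fin k × Fin r)) ℂ)),
      (SA : Set (Trip m n)) = {t | InL1 Ac t.1 t.2.1 t.2.2} ∧
      (SD : Set (Trip k r)) = {t | InL1 Dc t.1 t.2.1 t.2.2} ∧
      (SG : Set (Matrix ((Fin m × Fin n) ⊕ (Fin k × Fin r)) ((Fin m × Fin n) ⊕ (Fin k × Fin r)) ℂ ×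
        Matrix ((Fin m × Fin n) ⊕ (Fin k × Fin r)) ((Fin m × Fin n) ⊕ (Fin k × Fin r)) ℂ))
          = {p | ∃ v w, InBL1 Ac Dc B C p.1 p.2 v w} ∧
      Set.InjOn (PsiMap B C)
        ({t | InL1 Ac t.1 t.2.1 t.2.2} ×ˢ {t | InL1 Dc t.1 t.2.1 t.2.2}) ∧
      PsiMap B C '' ({t | InL1 Ac t.1 t.2.1 t.2.2} ×ˢ {t | InL1 Dc t.1 t.2.1 t.2.2})
          = {p | ∃ v w, InBL1 Ac Dc B C p.1 p.2 v w} ∧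
      Nonempty ((SA.prod SD) ≃ₗ[ℂ] SG) := by
  classical
  set SA := L1Sub Ac with hSA
  set SD := L1Sub Dc with hSD
  set f := (psiLin B C).comp ((SA.prod SD).subtype) with hf
  have hinj : Set.InjOn (PsiMap B C)
      ({t | InL1 Ac t.1 t.2.1 t.2.2} ×ˢ {t | InL1 Dc t.1 t.2.1 t.2.2}) := by
    rintro ⟨⟨X, Y, v⟩, P, Q, w⟩ ht ⟨⟨X', Y', v'⟩, P', Q', w'⟩ ht' heq
    obtain ⟨h1, h2⟩ := ht
    obtain ⟨h1', h2'⟩ := ht'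
    simp only [PsiMap, Prod.mk.injEq] at heq
    obtain ⟨hX, hY⟩ := heq
    have eX : X = X' := by simpa using congrArg Matrix.toBlocks₁₁ hX
    have eP : P = P' := by simpa using congrArg Matrix.toBlocks₂₂ hX
    have eY : Y = Y' := by simpa using congrArg Matrix.toBlocks₁₁ hY
    have eQ : Q = Q' := by simpa using congrArg Matrix.toBlocks₂₂ hY
    subst eX; subst eP; subst eY; subst eQ
    have ev : v = v' := ansatz_unique Ac hA h1 h1'
    have ew : w = w' := ansatz_unique Dc hD h2 h2'
    simp [ev, ew]
  have himg : PsiMap B C '' ({t | InL1 Ac t.1 t.2.1 t.2.2} ×ˢ {t | InL1 Dc t.1 t.2.1 t.2.2})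
      = {p | ∃ v w, InBL1 Ac Dc B C p.1 p.2 v w} := by
    ext p
    constructor
    · rintro ⟨⟨⟨X, Y, v⟩, P, Q, w⟩, ⟨h1, h2⟩, rfl⟩
      exact ⟨v, w, X, Y, P, Q, h1, h2, rfl, rfl⟩
    · rintro ⟨v, w, X, Y, P, Q, h1, h2, hX, hY⟩
      exact ⟨((X, Y, v), (P, Q, w)), ⟨h1, h2⟩, Prod.ext hX.symm hY.symm⟩
  have hprodset : ((SA.prod SD : Submodule ℂ (Trip m n × Trip k r)) : Set (Trip m n × Trip k r))
      = {t | InL1 Ac t.1 t.2.1 t.2.2} ×ˢ {t | InL1 Dc t.1 t.2.1 t.2.2} := by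
    ext t; rfl
  have hfinj : Function.Injective f := by
    rintro ⟨t, ht⟩ ⟨t', ht'⟩ hft
    refine Subtype.ext (hinj ?_ ?_ hft)
    · rw [← hprodset]; exact ht
    · rw [← hprodset]; exact ht'
  refine ⟨SA, SD, LinearMap.range f, rfl, rfl, ?_, hinj, himg,
    ⟨LinearEquiv.ofInjective f hfinj⟩⟩
  have : (LinearMap.range f : Set _) = PsiMap B C ''
      ((SA.prod SD : Submodule ℂ (Trip m n × Trip k r)) : Set (Trip m n × Trip k r)) := by
    rw [LinearMap.coe_range]
    have : ⇑f = (PsiMap B C) ∘ (Subtype.val : (SA.prod SD) → _) := rfl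
    rw [this, Set.range_comp, Subtype.range_coe]
  rw [this, hprodset, himg]
end
end

section
/- Let v ∈ ℂ^m, w ∈ ℂ^k and let 𝕏, 𝕐 ∈ ℂ^{(mn+kr)×(mn+kr)}. Then the pencil λ𝕏+𝕐 is in 𝕃₁(G) with ansatz vectors (v, w) if and only if there exist W ∈ ℂ^{mn×(m−1)n} and W₁ ∈ ℂ^{kr×(k−1)r} such that, with row blocks of sizes (mn, kr) and column blocks of sizes (n, (m−1)n, r, (k−1)r): 𝕏 = [[v⊗A_m, W, 0, 0],[0, 0, w⊗D_k, W₁]], and, with the same row blocks and column blocks of sizes ((m−1)n, n, (k−1)r, r): 𝕐 = [[v⊗[A_{m−1} A_{m−2} ⋯ A₁] − W, v⊗A₀, 0, −v⊗B],[0, w⊗C, w⊗[D_{k−1} D_{k−2} ⋯ D₁] − W₁, w⊗D₀]], where [A_{m−1} ⋯ A₁] denotes the n×(m−1)n horizontal concatenation and [D_{k−1} ⋯ D₁] the r×(k−1)r horizontal concatenation. -/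
open Matrix Finset

noncomputable section

/-- the matrix `𝕏 = [[v⊗A_m, W, 0, 0],[0, 0, w⊗D_k, W₁]]` (row blocks `(mn, kr)`,
column blocks `(n, (m−1)n, r, (k−1)r)`). -/
def X2form {m k n r : ℕ} (Am : Matrix (Fin n) (Fin n) ℂ) (Dk : Matrix (Fin r) (Fin r) ℂ)
    (v : Fin m → ℂ) (w : Fin k → ℂ)
    (W : Matrix (Fin m × Fin n) (Fin (m - 1) × Fin n) ℂ)
    (W1 : Matrix (Fin k × Fin r) (Fin (k - 1) × Fin r) ℂ) :
    Matrix ((Fin m × Fin n) ⊕ (Fin k × Fin r)) ((Fin m × Fin n) ⊕ (Fin k × Fin r)) ℂ :=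
  fun i j =>
    match i, j with
    | Sum.inl (a, p), Sum.inl (b, q) =>
        if hb : (b : ℕ) = 0 then v a * Am p q
        else W (a, p) (⟨(b : ℕ) - 1, by have := b.isLt; omega⟩, q)
    | Sum.inl _, Sum.inr _ => 0
    | Sum.inr _, Sum.inl _ => 0
    | Sum.inr (c, s), Sum.inr (d, t) =>
        if hd : (d : ℕ) = 0 then w c * Dk s t
        else W1 (c, s) (⟨(d : ℕ) - 1, by have := d.isLt; omega⟩, t)

/-- the matrix `𝕐 = [[v⊗[A_{m−1} ⋯ A₁] − W, v⊗A₀, 0, −v⊗B],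
[0, w⊗C, w⊗[D_{k−1} ⋯ D₁] − W₁, w⊗D₀]]` (row blocks `(mn, kr)`, column blocks
`((m−1)n, n, (k−1)r, r)`). -/
def Y2form {m k n r : ℕ} (Ac : Fin (m + 1) → Matrix (Fin n) (Fin n) ℂ)
    (Dc : Fin (k + 1) → Matrix (Fin r) (Fin r) ℂ)
    (B : Matrix (Fin n) (Fin r) ℂ) (C : Matrix (Fin r) (Fin n) ℂ)
    (v : Fin m → ℂ) (w : Fin k → ℂ)
    (W : Matrix (Fin m × Fin n) (Fin (m - 1) × Fin n) ℂ)
    (W1 : Matrix (Fin k × Fin r) (Fin (k - 1) × Fin r) ℂ) :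
    Matrix ((Fin m × Fin n) ⊕ (Fin k × Fin r)) ((Fin m × Fin n) ⊕ (Fin k × Fin r)) ℂ :=
  fun i j =>
    match i, j with
    | Sum.inl (a, p), Sum.inl (b, q) =>
        if hb : (b : ℕ) = m - 1 then v a * Ac 0 p q
        else v a * Ac ⟨m - 1 - (b : ℕ), by omega⟩ p q
          - W (a, p) (⟨(b : ℕ), by have := b.isLt; omega⟩, q)
    | Sum.inl (a, p), Sum.inr (d, t) =>
        if (d : ℕ) = k - 1 then -(v a * B p t) else 0
    | Sum.inr (c, s), Sum.inl (b, q) =>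
        if (b : ℕ) = m - 1 then w c * C s q else 0
    | Sum.inr (c, s), Sum.inr (d, t) =>
        if hd : (d : ℕ) = k - 1 then w c * Dc 0 s t
        else w c * Dc ⟨k - 1 - (d : ℕ), by omega⟩ s t
          - W1 (c, s) (⟨(d : ℕ), by have := d.isLt; omega⟩, t)

lemma coeff_zero_of_sum {N : ℕ} (c : ℕ → ℂ)
    (h : ∀ lam : ℂ, ∑ t ∈ Finset.range N, c t * lam ^ t = 0) :
    ∀ t, t < N → c t = 0 := by
  intro t ht
  have hP : (∑ j ∈ Finset.range N, Polynomial.C (c j) * Polynomial.X ^ j : Polynomial ℂ) = 0 := by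
    apply Polynomial.funext
    intro x
    simpa [Polynomial.eval_finset_sum] using h x
  have h2 := congrArg (fun p : Polynomial ℂ => p.coeff t) hP
  simpa [Polynomial.finset_sum_coeff, Polynomial.coeff_C_mul, Polynomial.coeff_X_pow, ht]
    using h2

lemma sum_shiftX {d : ℕ} (f : ℕ → ℂ) (lam : ℂ) :
    ∑ b ∈ Finset.range d, f b * lam ^ (d - b)
      = ∑ t ∈ Finset.range (d + 1), (if 1 ≤ t then f (d - t) else 0) * lam ^ t := by
  rw [Finset.sum_range_succ', ← Finset.sum_range_reflect]
  simp only [if_pos (Nat.le_add_left 1 _), if_neg (by omega : ¬ (1:ℕ) ≤ 0), zero_mul, add_zero]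
  apply Finset.sum_congr rfl
  intro j hj
  simp only [Finset.mem_range] at hj
  rw [(by omega : d - (d - 1 - j) = j + 1), (by omega : d - 1 - j = d - (j + 1))]

lemma sum_shiftY {d : ℕ} (hd : 1 ≤ d) (f : ℕ → ℂ) (lam : ℂ) :
    ∑ b ∈ Finset.range d, f b * lam ^ (d - 1 - b)
      = ∑ t ∈ Finset.range (d + 1), (if t ≤ d - 1 then f (d - 1 - t) else 0) * lam ^ t := by
  rw [Finset.sum_range_succ, ← Finset.sum_range_reflect]
  rw [if_neg (by omega), zero_mul, add_zero]
  apply Finset.sum_congr rfl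
  intro j hj
  simp only [Finset.mem_range] at hj
  rw [if_pos (by omega), (by omega : d - 1 - (d - 1 - j) = j)]

lemma entry_expand {d n : ℕ} (hd : 1 ≤ d)
    (Pc : Fin (d + 1) → Matrix (Fin n) (Fin n) ℂ)
    (X Y : Matrix (Fin d × Fin n) (Fin d × Fin n) ℂ) (v : Fin d → ℂ)
    (lam : ℂ) (a : Fin d) (p q : Fin n) :
    ((lam • X + Y) * vKron (Lam d lam) (1 : Matrix (Fin n) (Fin n) ℂ)) (a,p) q
      - vKron v (polyEval Pc lam) (a,p) q
      = ∑ t ∈ Finset.range (d+1),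
          ((if 1 ≤ t then X (a,p) (⟨(d-t) % d, Nat.mod_lt _ hd⟩, q) else 0)
           + (if t ≤ d-1 then Y (a,p) (⟨(d-1-t) % d, Nat.mod_lt _ hd⟩, q) else 0)
           - v a * Pc ⟨t % (d+1), Nat.mod_lt _ (Nat.succ_pos d)⟩ p q) * lam ^ t := by
  have hL : ((lam • X + Y) * vKron (Lam d lam) (1 : Matrix (Fin n) (Fin n) ℂ)) (a,p) q
      = ∑ b : Fin d, (lam * X (a,p) (b,q) + Y (a,p) (b,q)) * lam ^ (d - 1 - (b:ℕ)) := by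
    rw [Matrix.mul_apply, Fintype.sum_prod_type]
    apply Finset.sum_congr rfl
    intro b _
    simp [vKron, Lam, Matrix.one_apply, mul_ite, Finset.sum_ite_eq']
  have hL2 : ∑ b : Fin d, (lam * X (a,p) (b,q) + Y (a,p) (b,q)) * lam ^ (d - 1 - (b:ℕ))
      = (∑ b ∈ Finset.range d, (fun j => X (a,p) (⟨j % d, Nat.mod_lt _ hd⟩, q)) b * lam ^ (d - b))
        + ∑ b ∈ Finset.range d, (fun j => Y (a,p) (⟨j % d, Nat.mod_lt _ hd⟩, q)) b * lam ^ (d - 1 - b) := by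
    rw [← Finset.sum_add_distrib]
    rw [← Fin.sum_univ_eq_sum_range]
    apply Finset.sum_congr rfl
    intro b _
    have hb : (b:ℕ) % d = (b:ℕ) := Nat.mod_eq_of_lt b.isLt
    have hfin : (⟨(b:ℕ) % d, Nat.mod_lt _ hd⟩ : Fin d) = b := by
      apply Fin.ext; simp [hb]
    dsimp only
    rw [hfin]
    have hpow : lam * lam ^ (d - 1 - (b:ℕ)) = lam ^ (d - (b:ℕ)) := by
      rw [← pow_succ']
      congr 1
      have := b.isLt; omega
    ring_nf
    rw [← hpow]
    ring
  have hR : vKron v (polyEval Pc lam) (a,p) q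
      = ∑ t ∈ Finset.range (d+1), v a * Pc ⟨t % (d+1), Nat.mod_lt _ (Nat.succ_pos d)⟩ p q * lam ^ t := by
    simp only [vKron, polyEval, Matrix.sum_apply]
    rw [Finset.mul_sum, ← Fin.sum_univ_eq_sum_range]
    apply Finset.sum_congr rfl
    intro j _
    have hfin : (⟨(j:ℕ) % (d+1), Nat.mod_lt _ (Nat.succ_pos d)⟩ : Fin (d+1)) = j := by
      apply Fin.ext; simp [Nat.mod_eq_of_lt j.isLt]
    rw [hfin]
    simp [Matrix.smul_apply]
    ring
  rw [hL, hL2, hR, sum_shiftX, sum_shiftY hd, ← Finset.sum_add_distrib, ← Finset.sum_sub_distrib]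
  apply Finset.sum_congr rfl
  intro t _
  ring

lemma inL1_iff {d n : ℕ} (hd : 1 ≤ d)
    (Pc : Fin (d + 1) → Matrix (Fin n) (Fin n) ℂ)
    (X Y : Matrix (Fin d × Fin n) (Fin d × Fin n) ℂ) (v : Fin d → ℂ) :
    InL1 Pc X Y v ↔ ∃ W : Matrix (Fin d × Fin n) (Fin (d - 1) × Fin n) ℂ,
      (∀ (a : Fin d) (p : Fin n) (b : Fin d) (q : Fin n),
        X (a, p) (b, q) =
          if hb : (b : ℕ) = 0 then v a * Pc (Fin.last d) p q
          else W (a, p) (⟨(b : ℕ) - 1, by have := b.isLt; omega⟩, q)) ∧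
      (∀ (a : Fin d) (p : Fin n) (b : Fin d) (q : Fin n),
        Y (a, p) (b, q) =
          if hb : (b : ℕ) = d - 1 then v a * Pc 0 p q
          else v a * Pc ⟨d - 1 - (b : ℕ), by omega⟩ p q
            - W (a, p) (⟨(b : ℕ), by have := b.isLt; omega⟩, q)) := by
  have key : InL1 Pc X Y v ↔ ∀ (a : Fin d) (p q : Fin n) (lam : ℂ),
      ∑ t ∈ Finset.range (d+1),
          ((if 1 ≤ t then X (a,p) (⟨(d-t) % d, Nat.mod_lt _ hd⟩, q) else 0)
           + (if t ≤ d-1 then Y (a,p) (⟨(d-1-t) % d, Nat.mod_lt _ hd⟩, q) else 0)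
           - v a * Pc ⟨t % (d+1), Nat.mod_lt _ (Nat.succ_pos d)⟩ p q) * lam ^ t = 0 := by
    constructor
    · intro h a p q lam
      rw [← entry_expand hd Pc X Y v lam a p q, h lam, sub_self]
    · intro h lam
      ext ⟨a, p⟩ q
      have := entry_expand hd Pc X Y v lam a p q
      rw [h a p q lam] at this
      exact sub_eq_zero.mp this.symm.symm
  rw [key]
  constructor
  · intro h
    have hc : ∀ (a : Fin d) (p q : Fin n) (t : ℕ), t < d + 1 →
        (if 1 ≤ t then X (a,p) (⟨(d-t) % d, Nat.mod_lt _ hd⟩, q) else 0)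
        + (if t ≤ d-1 then Y (a,p) (⟨(d-1-t) % d, Nat.mod_lt _ hd⟩, q) else 0)
        - v a * Pc ⟨t % (d+1), Nat.mod_lt _ (Nat.succ_pos d)⟩ p q = 0 := by
      intro a p q t ht
      exact coeff_zero_of_sum _ (fun lam => h a p q lam) t ht
    refine ⟨fun i j => X i (⟨(j.1:ℕ)+1, by have := j.1.isLt; omega⟩, j.2), ?_, ?_⟩
    · intro a p b q
      by_cases hb : (b:ℕ) = 0
      · rw [dif_pos hb]
        have h1 := hc a p q d (by omega)
        rw [if_pos hd, if_neg (by omega)] at h1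
        simp only [Nat.sub_self, Nat.zero_mod, Nat.mod_succ] at h1
        have e0 : (⟨(0:ℕ), by omega⟩ : Fin d) = b := Fin.ext (by simp [hb])
        have e1 : (⟨d, by omega⟩ : Fin (d+1)) = Fin.last d := rfl
        rw [e0, e1] at h1
        linear_combination h1
      · rw [dif_neg hb]
        dsimp only
        have e : (b:ℕ) - 1 + 1 = (b:ℕ) := by omega
        simp only [e]
    · intro a p b q
      by_cases hb : (b:ℕ) = d - 1
      · rw [dif_pos hb]
        have h1 := hc a p q 0 (by omega)
        rw [if_neg (by omega), if_pos (by omega)] at h1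
        simp only [Nat.sub_zero, Nat.zero_mod, Nat.mod_eq_of_lt (by omega : d - 1 < d)] at h1
        have e0 : (⟨d - 1, by omega⟩ : Fin d) = b := Fin.ext (by simp [hb])
        have e1 : (⟨(0:ℕ), by omega⟩ : Fin (d+1)) = 0 := rfl
        rw [e0, e1] at h1
        linear_combination h1
      · rw [dif_neg hb]
        dsimp only
        have hblt := b.isLt
        have h1 := hc a p q (d - 1 - (b:ℕ)) (by omega)
        rw [if_pos (by omega), if_pos (by omega)] at h1
        simp only [(by omega : d - (d - 1 - (b:ℕ)) = (b:ℕ) + 1),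
          (by omega : d - 1 - (d - 1 - (b:ℕ)) = (b:ℕ)),
          Nat.mod_eq_of_lt (by omega : (b:ℕ) + 1 < d),
          Nat.mod_eq_of_lt (by omega : (b:ℕ) < d),
          Nat.mod_eq_of_lt (by omega : d - 1 - (b:ℕ) < d + 1)] at h1
        have e0 : (⟨(b:ℕ), by omega⟩ : Fin d) = b := Fin.ext rfl
        rw [e0] at h1
        linear_combination h1
  · rintro ⟨W, hX, hY⟩ a p q lam
    apply Finset.sum_eq_zero
    intro t ht
    simp only [Finset.mem_range] at ht
    have hco : (if 1 ≤ t then X (a,p) (⟨(d-t) % d, Nat.mod_lt _ hd⟩, q) else 0)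
        + (if t ≤ d-1 then Y (a,p) (⟨(d-1-t) % d, Nat.mod_lt _ hd⟩, q) else 0)
        - v a * Pc ⟨t % (d+1), Nat.mod_lt _ (Nat.succ_pos d)⟩ p q = 0 := by
      simp only [Nat.mod_eq_of_lt ht]
      rcases Nat.eq_or_lt_of_le (Nat.lt_succ_iff.mp ht) with h1 | h1
      · -- t = d
        subst h1
        rw [if_pos hd, if_neg (by omega), hX]
        rw [dif_pos (by simp)]
        have e1 : (⟨t, by omega⟩ : Fin (t+1)) = Fin.last t := rfl
        rw [e1]
        ring
      · rcases Nat.eq_zero_or_pos t with h0 | h0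
        · -- t = 0
          subst h0
          rw [if_neg (by omega), if_pos (by omega), hY]
          rw [dif_pos (show ((⟨(d-1-0) % d, Nat.mod_lt _ hd⟩ : Fin d) : ℕ) = d - 1 by
            simp [Nat.mod_eq_of_lt (by omega : d - 1 < d)])]
          have e1 : (⟨(0:ℕ), by omega⟩ : Fin (d+1)) = 0 := Fin.ext (by simp)
          rw [e1]
          ring
        · -- 1 ≤ t ≤ d - 1
          rw [if_pos (by omega : 1 ≤ t), if_pos (by omega : t ≤ d - 1), hX, hY]
          rw [dif_neg (by simp [Nat.mod_eq_of_lt (by omega : d - t < d)]; omega),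
              dif_neg (by simp [Nat.mod_eq_of_lt (by omega : d - 1 - t < d)]; omega)]
          simp only [Nat.mod_eq_of_lt (by omega : d - t < d),
            Nat.mod_eq_of_lt (by omega : d - 1 - t < d),
            (by omega : d - t - 1 = d - 1 - t),
            (by omega : d - 1 - (d - 1 - t) = t)]
          ring
    rw [hco, zero_mul]

/-- characterization of the pencils in `𝕃₁(G)` with ansatz vectors `(v, w)`:
they are exactly the pencils `λ𝕏 + 𝕐` with `𝕏 = X2form` and `𝕐 = Y2form` for arbitrary
`W ∈ ℂ^{mn×(m−1)n}` and `W₁ ∈ ℂ^{kr×(k−1)r}`. -/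
theorem stmt2 {m k n r : ℕ} (hm : 1 ≤ m) (hk : 1 ≤ k) (hn : 1 ≤ n) (hr : 1 ≤ r)
    (Ac : Fin (m + 1) → Matrix (Fin n) (Fin n) ℂ)
    (Dc : Fin (k + 1) → Matrix (Fin r) (Fin r) ℂ)
    (B : Matrix (Fin n) (Fin r) ℂ) (C : Matrix (Fin r) (Fin n) ℂ)
    (v : Fin m → ℂ) (w : Fin k → ℂ)
    (XX YY : Matrix ((Fin m × Fin n) ⊕ (Fin k × Fin r)) ((Fin m × Fin n) ⊕ (Fin k × Fin r)) ℂ) :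
    InBL1 Ac Dc B C XX YY v w ↔
      ∃ (W : Matrix (Fin m × Fin n) (Fin (m - 1) × Fin n) ℂ)
        (W1 : Matrix (Fin k × Fin r) (Fin (k - 1) × Fin r) ℂ),
        XX = X2form (Ac (Fin.last m)) (Dc (Fin.last k)) v w W W1 ∧
        YY = Y2form Ac Dc B C v w W W1 := by
  
  constructor
  · rintro ⟨X, Y, P, Q, hA, hD, hXX, hYY⟩
    obtain ⟨W, hX1, hY1⟩ := (inL1_iff hm Ac X Y v).mp hA
    obtain ⟨W1, hP1, hQ1⟩ := (inL1_iff hk Dc P Q w).mp hD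
    refine ⟨W, W1, ?_, ?_⟩
    · rw [hXX]
      funext i j
      rcases i with ⟨a, p⟩ | ⟨c, s⟩ <;> rcases j with ⟨b, q⟩ | ⟨e, t⟩
      · exact hX1 a p b q
      · rfl
      · rfl
      · exact hP1 c s e t
    · rw [hYY]
      funext i j
      rcases i with ⟨a, p⟩ | ⟨c, s⟩ <;> rcases j with ⟨b, q⟩ | ⟨e, t⟩
      · exact hY1 a p b q
      · show -(oKron v (eVec k (k-1)) B) (a, p) (e, t) = _
        show -(v a * eVec k (k-1) e * B p t) = _
        show _ = if (e : ℕ) = k - 1 then -(v a * B p t) else 0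
        unfold eVec
        split_ifs <;> ring
      · show (oKron w (eVec m (m-1)) C) (c, s) (b, q) = _
        show w c * eVec m (m-1) b * C s q = _
        show _ = if (b : ℕ) = m - 1 then w c * C s q else 0
        unfold eVec
        split_ifs <;> ring
      · exact hQ1 c s e t
  · rintro ⟨W, W1, hXX, hYY⟩
    refine ⟨fun i j => X2form (Ac (Fin.last m)) (Dc (Fin.last k)) v w W W1 (Sum.inl i) (Sum.inl j),
      fun i j => Y2form Ac Dc B C v w W W1 (Sum.inl i) (Sum.inl j),
      fun i j => X2form (Ac (Fin.last m)) (Dc (Fin.last k)) v w W W1 (Sum.inr i) (Sum.inr j),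
      fun i j => Y2form Ac Dc B C v w W W1 (Sum.inr i) (Sum.inr j), ?_, ?_, ?_, ?_⟩
    · exact (inL1_iff hm Ac _ _ v).mpr ⟨W, fun a p b q => rfl, fun a p b q => rfl⟩
    · exact (inL1_iff hk Dc _ _ w).mpr ⟨W1, fun a p b q => rfl, fun a p b q => rfl⟩
    · rw [hXX]
      funext i j
      rcases i with ⟨a, p⟩ | ⟨c, s⟩ <;> rcases j with ⟨b, q⟩ | ⟨e, t⟩ <;> rfl
    · rw [hYY]
      funext i j
      rcases i with ⟨a, p⟩ | ⟨c, s⟩ <;> rcases j with ⟨b, q⟩ | ⟨e, t⟩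
      · rfl
      · show _ = -(v a * eVec k (k-1) e * B p t)
        show (if (e : ℕ) = k - 1 then -(v a * B p t) else 0) = _
        unfold eVec
        split_ifs <;> ring
      · show _ = w c * eVec m (m-1) b * C s q
        show (if (b : ℕ) = m - 1 then w c * C s q else 0) = _
        unfold eVec
        split_ifs <;> ring
      · rfl
end
end

section
/- Let λ₀ ∈ ℂ with det A(λ₀) ≠ 0 and let * denote the conjugate transpose. Then the linear map g : ℂ^r → ℂ^{n+r} defined by g(y) = ((−C A(λ₀)^{-1})^* y, y) restricts to a linear bijection from {y ∈ ℂ^r : G(λ₀)^* y = 0} onto {u ∈ ℂ^{n+r} : S(λ₀)^* u = 0}. -/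
open Matrix Finset

noncomputable section

/-- the Rosenbrock system matrix `S(λ) = [[A(λ), −B],[C, D(λ)]]`. -/
def Smat {m k n r : ℕ} (Ac : Fin (m + 1) → Matrix (Fin n) (Fin n) ℂ)
    (Dc : Fin (k + 1) → Matrix (Fin r) (Fin r) ℂ)
    (B : Matrix (Fin n) (Fin r) ℂ) (C : Matrix (Fin r) (Fin n) ℂ) (lam : ℂ) :
    Matrix (Fin n ⊕ Fin r) (Fin n ⊕ Fin r) ℂ :=
  Matrix.fromBlocks (polyEval Ac lam) (-B) C (polyEval Dc lam)

/-- for `λ₀` with `det A(λ₀) ≠ 0`, the linear map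
`g y = ((−C A(λ₀)⁻¹)^* y, y)` restricts to a bijection from the left null space of `G(λ₀)`
(i.e. the null space of `G(λ₀)^*`) onto the left null space of `S(λ₀)`. -/
theorem stmt5 {m k n r : ℕ} (hm : 1 ≤ m) (hk : 1 ≤ k) (hn : 1 ≤ n) (hr : 1 ≤ r)
    (Ac : Fin (m + 1) → Matrix (Fin n) (Fin n) ℂ)
    (Dc : Fin (k + 1) → Matrix (Fin r) (Fin r) ℂ)
    (B : Matrix (Fin n) (Fin r) ℂ) (C : Matrix (Fin r) (Fin n) ℂ)
    (lam0 : ℂ) (hdet : (polyEval Ac lam0).det ≠ 0) :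
    Set.BijOn (fun y : Fin r → ℂ => Sum.elim (((-(C * (polyEval Ac lam0)⁻¹))ᴴ) *ᵥ y) y)
      {y : Fin r → ℂ | (Gmat Ac Dc B C lam0)ᴴ *ᵥ y = 0}
      {u : Fin n ⊕ Fin r → ℂ | (Smat Ac Dc B C lam0)ᴴ *ᵥ u = 0} := by
  classical
  set A := polyEval Ac lam0 with hAdef
  have hA : A⁻¹ * A = 1 := Matrix.nonsing_inv_mul _ (isUnit_iff_ne_zero.mpr hdet)
  have h1 : Aᴴ * (-(C * A⁻¹))ᴴ = -Cᴴ := by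
    rw [conjTranspose_neg, Matrix.mul_neg, conjTranspose_mul, ← Matrix.mul_assoc,
      ← conjTranspose_mul, hA, conjTranspose_one, Matrix.one_mul]
  have h2 : (-B)ᴴ * (-(C * A⁻¹))ᴴ = (C * A⁻¹ * B)ᴴ := by
    simp [Matrix.conjTranspose_mul, Matrix.mul_assoc]
  have hS : ∀ (x : Fin n → ℂ) (y : Fin r → ℂ), (Smat Ac Dc B C lam0)ᴴ *ᵥ Sum.elim x y
      = Sum.elim (Aᴴ *ᵥ x + Cᴴ *ᵥ y) ((-B)ᴴ *ᵥ x + (polyEval Dc lam0)ᴴ *ᵥ y) := by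
    intro x y
    rw [Smat, Matrix.fromBlocks_conjTranspose, Matrix.fromBlocks_mulVec]
    simp [Sum.elim_comp_inl, Sum.elim_comp_inr]
    rfl
  have hG : (Gmat Ac Dc B C lam0)ᴴ = (polyEval Dc lam0)ᴴ + (C * A⁻¹ * B)ᴴ := by
    rw [Gmat, conjTranspose_add]
  have key : ∀ y : Fin r → ℂ,
      (Smat Ac Dc B C lam0)ᴴ *ᵥ Sum.elim ((-(C * A⁻¹))ᴴ *ᵥ y) y
      = Sum.elim (0 : Fin n → ℂ) ((Gmat Ac Dc B C lam0)ᴴ *ᵥ y) := by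
    intro y
    rw [hS]
    have e1 : Aᴴ *ᵥ ((-(C * A⁻¹))ᴴ *ᵥ y) + Cᴴ *ᵥ y = 0 := by
      rw [Matrix.mulVec_mulVec, h1, Matrix.neg_mulVec, neg_add_cancel]
    have e2 : (-B)ᴴ *ᵥ ((-(C * A⁻¹))ᴴ *ᵥ y) + (polyEval Dc lam0)ᴴ *ᵥ y
        = (Gmat Ac Dc B C lam0)ᴴ *ᵥ y := by
      rw [Matrix.mulVec_mulVec, h2, hG, Matrix.add_mulVec, add_comm]
    rw [e1, e2]
  refine ⟨?_, ?_, ?_⟩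
  · intro y hy
    simp only [Set.mem_setOf_eq] at hy ⊢
    rw [key, hy]
    ext (i | i) <;> simp
  · intro y₁ _ y₂ _ h
    funext i
    exact congrFun h (Sum.inr i)
  · intro u hu
    simp only [Set.mem_setOf_eq] at hu
    have hu0 := hu
    set x := u ∘ Sum.inl with hxdef
    set y := u ∘ Sum.inr with hydef
    have hu' : u = Sum.elim x y := by
      funext i; cases i <;> rfl
    rw [hu', hS] at hu
    have e1 : Aᴴ *ᵥ x + Cᴴ *ᵥ y = 0 := funext fun i => congrFun hu (Sum.inl i)
    have e2 : (-B)ᴴ *ᵥ x + (polyEval Dc lam0)ᴴ *ᵥ y = 0 :=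
      funext fun i => congrFun hu (Sum.inr i)
    have hdetH : IsUnit (Aᴴ).det := by
      rw [Matrix.det_conjTranspose]
      exact isUnit_iff_ne_zero.mpr (star_ne_zero.mpr hdet)
    have hx : x = (-(C * A⁻¹))ᴴ *ᵥ y := by
      have h3 : Aᴴ *ᵥ x = Aᴴ *ᵥ ((-(C * A⁻¹))ᴴ *ᵥ y) := by
        rw [Matrix.mulVec_mulVec, h1, Matrix.neg_mulVec]
        have := congrArg (fun v => v - Cᴴ *ᵥ y) e1
        simpa [add_sub_cancel_right, zero_sub] using this
      have h4 : (Aᴴ)⁻¹ *ᵥ (Aᴴ *ᵥ x) = (Aᴴ)⁻¹ *ᵥ (Aᴴ *ᵥ ((-(C * A⁻¹))ᴴ *ᵥ y)) := by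
        rw [h3]
      rwa [Matrix.mulVec_mulVec, Matrix.mulVec_mulVec, Matrix.nonsing_inv_mul _ hdetH,
        Matrix.one_mulVec, Matrix.one_mulVec] at h4
    refine ⟨y, ?_, ?_⟩
    · simp only [Set.mem_setOf_eq]
      have hk2 := key y
      rw [← hx, ← hu'] at hk2
      exact (funext fun i => congrFun (hk2.symm.trans hu0) (Sum.inr i))
    · simp only
      rw [hu', hx]
end
end

section
/- Suppose the pencil 𝕃(λ) is in 𝕃₁(G) with ansatz vectors (v, w). Then for every λ ∈ ℂ with det A(λ) ≠ 0, 𝕃(λ) · [Λ_{m-1}(λ) ⊗ (A(λ)^{-1} B); Λ_{k-1}(λ) ⊗ I_r] = [0; w ⊗ G(λ)], where the middle factor is the (mn+kr)×r matrix obtained by stacking the mn×r block Λ_{m-1}(λ) ⊗ (A(λ)^{-1} B) above the kr×r block Λ_{k-1}(λ) ⊗ I_r, and the right-hand side stacks the zero mn×r matrix above w ⊗ G(λ). -/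
open Matrix Finset

noncomputable section

lemma vKron_mul {a : ℕ} {α β γ : Type*} [Fintype β] (v : Fin a → ℂ)
    (M : Matrix α β ℂ) (N : Matrix β γ ℂ) :
    vKron v M * N = vKron v (M * N) := by
  ext i j
  simp [vKron, Matrix.mul_apply, Finset.mul_sum, mul_assoc]

lemma vKron_one_mul {a n : ℕ} {γ : Type*} (v : Fin a → ℂ) (N : Matrix (Fin n) γ ℂ) :
    vKron v (1 : Matrix (Fin n) (Fin n) ℂ) * N = vKron v N := by
  rw [vKron_mul, Matrix.one_mul]

lemma oKron_mul_vKron {a b : ℕ} {α β γ : Type*} [Fintype β]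
    (v : Fin a → ℂ) (w u : Fin b → ℂ) (M : Matrix α β ℂ) (N : Matrix β γ ℂ) :
    oKron v w M * vKron u N = (∑ p, w p * u p) • vKron v (M * N) := by
  ext i j
  simp only [oKron, vKron, Matrix.mul_apply, Matrix.smul_apply, smul_eq_mul]
  rw [Fintype.sum_prod_type, Finset.sum_mul]
  refine Finset.sum_congr rfl fun p _ => ?_
  simp only [Finset.mul_sum]
  exact Finset.sum_congr rfl fun q _ => by ring

lemma eVec_dot_Lam {a : ℕ} (ha : 1 ≤ a) (lam : ℂ) :
    ∑ p, eVec a (a - 1) p * Lam a lam p = 1 := by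
  have : ∀ p : Fin a, eVec a (a - 1) p * Lam a lam p
      = if p = ⟨a - 1, by omega⟩ then 1 else 0 := by
    intro p
    by_cases h : (p : ℕ) = a - 1
    · have : p = ⟨a - 1, by omega⟩ := Fin.ext h
      simp [this, eVec, Lam]
    · have : p ≠ ⟨a - 1, by omega⟩ := by
        intro hp; exact h (by rw [hp])
      simp [this, eVec, h]
  rw [Finset.sum_congr rfl fun p _ => this p]
  simp

/-- if `𝕃(λ) = λ𝕏 + 𝕐` is in `𝕃₁(G)` with ansatz vectors `(v, w)`, then for every
`λ` which is not a pole (i.e. `det A(λ) ≠ 0`),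
`𝕃(λ) ⬝ [Λ_{m-1}(λ) ⊗ (A(λ)⁻¹ B); Λ_{k-1}(λ) ⊗ I_r] = [0; w ⊗ G(λ)]`. -/
theorem stmt6 {m k n r : ℕ} (hm : 1 ≤ m) (hk : 1 ≤ k) (hn : 1 ≤ n) (hr : 1 ≤ r)
    (Ac : Fin (m + 1) → Matrix (Fin n) (Fin n) ℂ)
    (Dc : Fin (k + 1) → Matrix (Fin r) (Fin r) ℂ)
    (B : Matrix (Fin n) (Fin r) ℂ) (C : Matrix (Fin r) (Fin n) ℂ)
    (XX YY : Matrix ((Fin m × Fin n) ⊕ (Fin k × Fin r)) ((Fin m × Fin n) ⊕ (Fin k × Fin r)) ℂ)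
    (v : Fin m → ℂ) (w : Fin k → ℂ)
    (hL : InBL1 Ac Dc B C XX YY v w) :
    ∀ lam : ℂ, (polyEval Ac lam).det ≠ 0 →
      (lam • XX + YY) *
          Matrix.fromRows (vKron (Lam m lam) ((polyEval Ac lam)⁻¹ * B))
            (vKron (Lam k lam) (1 : Matrix (Fin r) (Fin r) ℂ))
        = Matrix.fromRows 0 (vKron w (Gmat Ac Dc B C lam)) := by
  intro lam hdet
  obtain ⟨X, Y, P, Q, hA, hD, hXX, hYY⟩ := hL
  subst hXX hYY
  have hAinv : polyEval Ac lam * (polyEval Ac lam)⁻¹ = 1 :=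
    Matrix.mul_nonsing_inv _ (isUnit_iff_ne_zero.mpr hdet)
  have hblock : lam • Matrix.fromBlocks X 0 0 P
      + Matrix.fromBlocks Y (-(oKron v (eVec k (k - 1)) B)) (oKron w (eVec m (m - 1)) C) Q
      = Matrix.fromBlocks (lam • X + Y) (-(oKron v (eVec k (k - 1)) B))
          (oKron w (eVec m (m - 1)) C) (lam • P + Q) := by
    ext i j
    rcases i with i | i <;> rcases j with j | j <;> simp [Matrix.fromBlocks]
  rw [hblock, Matrix.fromBlocks_mul_fromRows]
  -- top block
  have htop : (lam • X + Y) * vKron (Lam m lam) ((polyEval Ac lam)⁻¹ * B)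
      + -(oKron v (eVec k (k - 1)) B) * vKron (Lam k lam) (1 : Matrix (Fin r) (Fin r) ℂ)
      = 0 := by
    rw [← vKron_one_mul (Lam m lam) ((polyEval Ac lam)⁻¹ * B), ← Matrix.mul_assoc,
      hA lam, Matrix.neg_mul, oKron_mul_vKron, vKron_mul, eVec_dot_Lam hk]
    rw [← Matrix.mul_assoc, hAinv, Matrix.one_mul, Matrix.mul_one, one_smul,
      add_neg_cancel]
  -- bottom block
  have hbot : oKron w (eVec m (m - 1)) C * vKron (Lam m lam) ((polyEval Ac lam)⁻¹ * B)
      + (lam • P + Q) * vKron (Lam k lam) (1 : Matrix (Fin r) (Fin r) ℂ)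
      = vKron w (Gmat Ac Dc B C lam) := by
    rw [oKron_mul_vKron, eVec_dot_Lam hm, one_smul, hD lam]
    ext i j
    simp [vKron, Gmat, Matrix.mul_assoc, mul_add, add_comm]
  rw [htop, hbot]
end
end

section
/- Let λ ∈ ℂ with det A(λ) ≠ 0 and let 𝕃 be a pencil in 𝕃₁(G) with ansatz vectors (v, w), where w ≠ 0. For x ∈ ℂ^r define z(x) = [Λ_{m-1}(λ) ⊗ (A(λ)^{-1} B x); Λ_{k-1}(λ) ⊗ x] ∈ ℂ^{mn+kr}. Then: (i) G(λ) x = 0 if and only if 𝕃(λ) z(x) = 0; (ii) the map x ↦ z(x) is an injective linear map from {x : G(λ)x = 0} into {u ∈ ℂ^{mn+kr} : 𝕃(λ)u = 0}; (iii) z(x) ≠ 0 whenever x ≠ 0. -/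
open Matrix Finset

noncomputable section

/-- the vector `z(x) = [Λ_{m-1}(λ) ⊗ (A(λ)⁻¹ B x); Λ_{k-1}(λ) ⊗ x] ∈ ℂ^{mn+kr}`. -/
def zvec (m k : ℕ) {n r : ℕ} (Ac : Fin (m + 1) → Matrix (Fin n) (Fin n) ℂ)
    (B : Matrix (Fin n) (Fin r) ℂ) (lam : ℂ) (x : Fin r → ℂ) :
    ((Fin m × Fin n) ⊕ (Fin k × Fin r)) → ℂ :=
  Sum.elim (fun ap => Lam m lam ap.1 * (((polyEval Ac lam)⁻¹ * B) *ᵥ x) ap.2)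
    (fun cs => Lam k lam cs.1 * x cs.2)

lemma eVec_dot {b : ℕ} (hb : 1 ≤ b) (lam : ℂ) :
    ∑ j : Fin b, eVec b (b - 1) j * Lam b lam j = 1 := by
  rw [Finset.sum_eq_single (⟨b - 1, by omega⟩ : Fin b)]
  · simp [eVec, Lam]
  · intro j _ hj
    have : (j : ℕ) ≠ b - 1 := fun h => hj (Fin.ext h)
    simp [eVec, this]
  · intro h; exact absurd (Finset.mem_univ _) h

lemma L1_mulVec {d n : ℕ} {Pc : Fin (d + 1) → Matrix (Fin n) (Fin n) ℂ}
    {X Y : Matrix (Fin d × Fin n) (Fin d × Fin n) ℂ} {v : Fin d → ℂ}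
    (h : InL1 Pc X Y v) (lam : ℂ) (u : Fin n → ℂ) :
    (lam • X + Y) *ᵥ (fun ip : Fin d × Fin n => Lam d lam ip.1 * u ip.2)
      = fun ip => v ip.1 * (polyEval Pc lam *ᵥ u) ip.2 := by
  have h1 : (fun ip : Fin d × Fin n => Lam d lam ip.1 * u ip.2)
      = vKron (Lam d lam) (1 : Matrix (Fin n) (Fin n) ℂ) *ᵥ u := by
    funext ip
    simp [vKron, mulVec, dotProduct, Matrix.one_apply, mul_ite, ite_mul, mul_assoc]
  rw [h1, mulVec_mulVec, h lam]
  funext ip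
  simp [vKron, mulVec, dotProduct, Finset.mul_sum, mul_assoc]

lemma oKron_mulVec' {a b p q : ℕ} (v : Fin a → ℂ) (w : Fin b → ℂ)
    (M : Matrix (Fin p) (Fin q) ℂ) (c : Fin b → ℂ) (x : Fin q → ℂ) :
    oKron v w M *ᵥ (fun jq : Fin b × Fin q => c jq.1 * x jq.2)
      = fun ip => v ip.1 * (∑ j, w j * c j) * (M *ᵥ x) ip.2 := by
  funext ip
  show ∑ jq : Fin b × Fin q, (v ip.1 * w jq.1 * M ip.2 jq.2) * (c jq.1 * x jq.2)
      = v ip.1 * (∑ j, w j * c j) * (∑ qq, M ip.2 qq * x qq)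
  rw [Fintype.sum_prod_type, mul_assoc, Finset.sum_mul_sum, Finset.mul_sum]
  refine Finset.sum_congr rfl fun j _ => ?_
  rw [Finset.mul_sum]
  refine Finset.sum_congr rfl fun qq _ => ?_
  ring

/-- eigenvector recovery for pencils in `𝕃₁(G)`: for `λ` with `det A(λ) ≠ 0` and
`𝕃 ∈ 𝕃₁(G)` with ansatz vectors `(v, w)`, `w ≠ 0`:
(i) `G(λ)x = 0 ↔ 𝕃(λ) z(x) = 0`; (ii) `x ↦ z(x)` is injective and (iii) linear;
(iv) `z(x) ≠ 0` whenever `x ≠ 0`. -/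
theorem stmt8 {m k n r : ℕ} (hm : 1 ≤ m) (hk : 1 ≤ k) (hn : 1 ≤ n) (hr : 1 ≤ r)
    (Ac : Fin (m + 1) → Matrix (Fin n) (Fin n) ℂ)
    (Dc : Fin (k + 1) → Matrix (Fin r) (Fin r) ℂ)
    (B : Matrix (Fin n) (Fin r) ℂ) (C : Matrix (Fin r) (Fin n) ℂ)
    (lam : ℂ) (hdet : (polyEval Ac lam).det ≠ 0)
    (XX YY : Matrix ((Fin m × Fin n) ⊕ (Fin k × Fin r)) ((Fin m × Fin n) ⊕ (Fin k × Fin r)) ℂ)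
    (v : Fin m → ℂ) (w : Fin k → ℂ) (hw : w ≠ 0)
    (hL : InBL1 Ac Dc B C XX YY v w) :
    (∀ x : Fin r → ℂ,
        Gmat Ac Dc B C lam *ᵥ x = 0 ↔ (lam • XX + YY) *ᵥ zvec m k Ac B lam x = 0) ∧
    (∀ x y : Fin r → ℂ, zvec m k Ac B lam x = zvec m k Ac B lam y → x = y) ∧
    (∀ (a : ℂ) (x y : Fin r → ℂ),
        zvec m k Ac B lam (a • x + y) = a • zvec m k Ac B lam x + zvec m k Ac B lam y) ∧
    (∀ x : Fin r → ℂ, x ≠ 0 → zvec m k Ac B lam x ≠ 0) := by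
  have ikm : Fin m := ⟨m - 1, by omega⟩
  have ikk : Fin k := ⟨k - 1, by omega⟩
  have hlast : Lam k lam ⟨k - 1, by omega⟩ = 1 := by simp [Lam]
  have key : ∀ x : Fin r → ℂ, (lam • XX + YY) *ᵥ zvec m k Ac B lam x
      = Sum.elim (0 : Fin m × Fin n → ℂ)
          (fun cs => w cs.1 * (Gmat Ac Dc B C lam *ᵥ x) cs.2) := by
    intro x
    obtain ⟨X, Y, P, Q, hXY, hPQ, hXX, hYY⟩ := hL
    subst hXX hYY
    set u : Fin n → ℂ := ((polyEval Ac lam)⁻¹ * B) *ᵥ x with hu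
    have hAu : polyEval Ac lam *ᵥ u = B *ᵥ x := by
      rw [hu, mulVec_mulVec, ← Matrix.mul_assoc,
        Matrix.mul_nonsing_inv _ (isUnit_iff_ne_zero.2 hdet), Matrix.one_mul]
    have hG : Gmat Ac Dc B C lam *ᵥ x = polyEval Dc lam *ᵥ x + C *ᵥ u := by
      rw [Gmat, Matrix.add_mulVec, Matrix.mul_assoc, ← mulVec_mulVec, ← hu]
    have hblock : lam • Matrix.fromBlocks X 0 0 P +
        Matrix.fromBlocks Y (-(oKron v (eVec k (k - 1)) B))
          (oKron w (eVec m (m - 1)) C) Q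
        = Matrix.fromBlocks (lam • X + Y) (-(oKron v (eVec k (k - 1)) B))
            (oKron w (eVec m (m - 1)) C) (lam • P + Q) := by
      rw [Matrix.fromBlocks_smul, Matrix.fromBlocks_add]
      simp
    rw [zvec, hblock, Matrix.fromBlocks_mulVec]
    have hcl : (Sum.elim (fun ap : Fin m × Fin n => Lam m lam ap.1 * u ap.2)
        (fun cs : Fin k × Fin r => Lam k lam cs.1 * x cs.2)) ∘ Sum.inl
        = fun ap : Fin m × Fin n => Lam m lam ap.1 * u ap.2 := rfl
    have hcr : (Sum.elim (fun ap : Fin m × Fin n => Lam m lam ap.1 * u ap.2)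
        (fun cs : Fin k × Fin r => Lam k lam cs.1 * x cs.2)) ∘ Sum.inr
        = fun cs : Fin k × Fin r => Lam k lam cs.1 * x cs.2 := rfl
    rw [hcl, hcr]
    rw [L1_mulVec hXY, L1_mulVec hPQ, Matrix.neg_mulVec, oKron_mulVec',
      oKron_mulVec', eVec_dot hk, eVec_dot hm]
    funext s
    cases s with
    | inl ip =>
        simp only [Sum.elim_inl, Pi.add_apply, Pi.neg_apply, Pi.zero_apply, hAu]
        ring
    | inr cs =>
        simp only [Sum.elim_inr, Pi.add_apply, hG]
        ring
  obtain ⟨i0, hi0⟩ : ∃ i, w i ≠ 0 := Function.ne_iff.mp hw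
  refine ⟨?_, ?_, ?_, ?_⟩
  · intro x
    constructor
    · intro hx
      rw [key x, hx]
      funext s
      cases s <;> simp
    · intro hx
      rw [key x] at hx
      funext q
      have := congrFun hx (Sum.inr (i0, q))
      simp only [Sum.elim_inr, Pi.zero_apply] at this
      rcases mul_eq_zero.mp this with h | h
      · exact absurd h hi0
      · exact h
  · intro x y hxy
    funext q
    have := congrFun hxy (Sum.inr (⟨k - 1, by omega⟩, q))
    simpa [zvec, hlast] using this
  · intro a x y
    funext s
    cases s with
    | inl ap =>
        simp only [zvec, Sum.elim_inl, Matrix.mulVec_add, Matrix.mulVec_smul,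
          Pi.add_apply, Pi.smul_apply, smul_eq_mul]
        ring
    | inr cs =>
        simp only [zvec, Sum.elim_inr, Pi.add_apply, Pi.smul_apply, smul_eq_mul]
        ring
  · intro x hx h0
    obtain ⟨q, hq⟩ : ∃ q, x q ≠ 0 := Function.ne_iff.mp hx
    have := congrFun h0 (Sum.inr (⟨k - 1, by omega⟩, q))
    rw [zvec] at this
    simp [hlast] at this
    exact hq this
end
end

section
/- Suppose the pencil 𝕃(λ) is in 𝕃₂(G) with ansatz vectors (s, z). Then for every λ ∈ ℂ with det A(λ) ≠ 0, [Λ_{m-1}(λ)ᵀ ⊗ (−C A(λ)^{-1}), Λ_{k-1}(λ)ᵀ ⊗ I_r] · 𝕃(λ) = [0, zᵀ ⊗ G(λ)], where the left factor is the r×(mn+kr) matrix obtained by horizontally concatenating the r×mn block Λ_{m-1}(λ)ᵀ ⊗ (−C A(λ)^{-1}) and the r×kr block Λ_{k-1}(λ)ᵀ ⊗ I_r, and the right-hand side concatenates the zero r×mn matrix with zᵀ ⊗ G(λ). -/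
open Matrix Finset

noncomputable section

lemma mul_rKron {a : ℕ} {α β γ : Type*} [Fintype β] (v : Fin a → ℂ)
    (M : Matrix α β ℂ) (N : Matrix β γ ℂ) :
    M * rKron v N = rKron v (M * N) := by
  ext i ⟨j1, j2⟩
  simp [rKron, Matrix.mul_apply, Finset.mul_sum]
  congr 1; ext p; ring

lemma rKron_eq {a : ℕ} {α β : Type*} [Fintype β] [DecidableEq β] (v : Fin a → ℂ)
    (M : Matrix α β ℂ) : rKron v M = M * rKron v (1 : Matrix β β ℂ) := by
  rw [mul_rKron, Matrix.mul_one]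

lemma rKron_mul_oKron {a b : ℕ} {α β γ : Type*} [Fintype β] (v w : Fin a → ℂ)
    (M : Matrix α β ℂ) (u : Fin b → ℂ) (N : Matrix β γ ℂ) :
    rKron v M * oKron w u N = (∑ i, v i * w i) • rKron u (M * N) := by
  ext i ⟨j1, j2⟩
  simp [rKron, oKron, Matrix.mul_apply, Fintype.sum_prod_type, Finset.sum_mul,
    Finset.mul_sum]
  rw [Finset.sum_comm]
  congr 1; ext p; congr 1; ext q; ring

lemma lam_dot_eVec {a : ℕ} (ha : 1 ≤ a) (lam : ℂ) :
    (∑ i, Lam a lam i * eVec a (a - 1) i) = 1 := by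
  have : (∑ i, Lam a lam i * eVec a (a - 1) i)
      = ∑ i : Fin a, if i = (⟨a - 1, by omega⟩ : Fin a) then lam ^ (a - 1 - (i : ℕ)) else 0 := by
    apply Finset.sum_congr rfl
    intro i _
    simp only [Lam, eVec, Fin.ext_iff]
    by_cases h : (i : ℕ) = a - 1 <;> simp [h]
  rw [this, Finset.sum_ite_eq' _ _ _]
  simp

lemma rKron_add {a : ℕ} {α β : Type*} (v : Fin a → ℂ) (M N : Matrix α β ℂ) :
    rKron v (M + N) = rKron v M + rKron v N := by
  ext i ⟨j1, j2⟩; simp [rKron]; ring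

/-- if `𝕃(λ) = λ𝕏 + 𝕐` is in `𝕃₂(G)` with ansatz vectors `(s, z)`, then for every
`λ` with `det A(λ) ≠ 0`,
`[Λ_{m-1}(λ)ᵀ ⊗ (−C A(λ)⁻¹), Λ_{k-1}(λ)ᵀ ⊗ I_r] ⬝ 𝕃(λ) = [0, zᵀ ⊗ G(λ)]`. -/
theorem stmt9 {m k n r : ℕ} (hm : 1 ≤ m) (hk : 1 ≤ k) (hn : 1 ≤ n) (hr : 1 ≤ r)
    (Ac : Fin (m + 1) → Matrix (Fin n) (Fin n) ℂ)
    (Dc : Fin (k + 1) → Matrix (Fin r) (Fin r) ℂ)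
    (B : Matrix (Fin n) (Fin r) ℂ) (C : Matrix (Fin r) (Fin n) ℂ)
    (XX YY : Matrix ((Fin m × Fin n) ⊕ (Fin k × Fin r)) ((Fin m × Fin n) ⊕ (Fin k × Fin r)) ℂ)
    (s : Fin m → ℂ) (z : Fin k → ℂ)
    (hL : InBL2 Ac Dc B C XX YY s z) :
    ∀ lam : ℂ, (polyEval Ac lam).det ≠ 0 →
      Matrix.fromCols (rKron (Lam m lam) (-(C * (polyEval Ac lam)⁻¹)))
          (rKron (Lam k lam) (1 : Matrix (Fin r) (Fin r) ℂ)) * (lam • XX + YY)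
        = Matrix.fromCols 0 (rKron z (Gmat Ac Dc B C lam)) := by
  obtain ⟨X, Y, P, Q, hA, hD, hXX, hYY⟩ := hL
  intro lam hdet
  have hu : IsUnit (polyEval Ac lam).det := isUnit_iff_ne_zero.mpr hdet
  subst hXX hYY
  rw [Matrix.fromBlocks_smul, Matrix.fromBlocks_add, Matrix.fromCols_mul_fromBlocks]
  have h1 : rKron (Lam m lam) (-(C * (polyEval Ac lam)⁻¹)) * (lam • X + Y)
      = rKron s (-(C * (polyEval Ac lam)⁻¹) * polyEval Ac lam) := by
    rw [rKron_eq, Matrix.mul_assoc, hA lam, mul_rKron]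
  have hcan : -(C * (polyEval Ac lam)⁻¹) * polyEval Ac lam = -C := by
    rw [Matrix.neg_mul, Matrix.mul_assoc, Matrix.nonsing_inv_mul _ hu, Matrix.mul_one]
  have h2 : rKron (Lam k lam) (1 : Matrix (Fin r) (Fin r) ℂ)
        * oKron (eVec k (k - 1)) s C = rKron s C := by
    rw [rKron_mul_oKron, lam_dot_eVec hk, Matrix.one_mul, one_smul]
  have h3 : rKron (Lam m lam) (-(C * (polyEval Ac lam)⁻¹))
        * -oKron (eVec m (m - 1)) z B
      = rKron z (C * (polyEval Ac lam)⁻¹ * B) := by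
    rw [Matrix.mul_neg, rKron_mul_oKron, lam_dot_eVec hm, one_smul]
    ext i ⟨j1, j2⟩; simp [rKron, Matrix.neg_mul]
  have h4 : rKron (Lam k lam) (1 : Matrix (Fin r) (Fin r) ℂ) * (lam • P + Q)
      = rKron z (polyEval Dc lam) := hD lam
  rw [h1, hcan, smul_zero, smul_zero, zero_add, zero_add, h2, h3, h4]
  refine congrArg₂ Matrix.fromCols ?_ ?_
  · ext i ⟨j1, j2⟩; simp [rKron]
  · rw [Gmat, rKron_add, add_comm]
end
end

section
/- Let λ ∈ ℂ with det A(λ) ≠ 0 and let 𝕃 be a pencil in 𝕃₂(G) with ansatz vectors (s, z), where z ≠ 0. For y ∈ ℂ^r define u(y) = [conj(Λ_{m-1}(λ)) ⊗ ((−C A(λ)^{-1})^* y); conj(Λ_{k-1}(λ)) ⊗ y] ∈ ℂ^{mn+kr}, where conj denotes entrywise complex conjugation and * the conjugate transpose. Then: (i) y^* G(λ) = 0 if and only if u(y)^* 𝕃(λ) = 0; (ii) the map y ↦ u(y) is injective and linear over the conjugation (in particular u(y) ≠ 0 whenever y ≠ 0). -/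
open Matrix Finset

noncomputable section

/-- the vector `u(y) = [conj(Λ_{m-1}(λ)) ⊗ ((−C A(λ)⁻¹)^* y); conj(Λ_{k-1}(λ)) ⊗ y]`. -/
def uvec (m k : ℕ) {n r : ℕ} (Ac : Fin (m + 1) → Matrix (Fin n) (Fin n) ℂ)
    (C : Matrix (Fin r) (Fin n) ℂ) (lam : ℂ) (y : Fin r → ℂ) :
    ((Fin m × Fin n) ⊕ (Fin k × Fin r)) → ℂ :=
  Sum.elim
    (fun ap => (starRingEnd ℂ) (Lam m lam ap.1) * ((-(C * (polyEval Ac lam)⁻¹))ᴴ *ᵥ y) ap.2)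
    (fun cs => (starRingEnd ℂ) (Lam k lam cs.1) * y cs.2)


lemma lam_last {a : ℕ} (ha : 1 ≤ a) (lam : ℂ) : Lam a lam ⟨a - 1, by omega⟩ = 1 := by
  simp [Lam]

lemma sum_eVec_mul {a : ℕ} (ha : 1 ≤ a) (g : Fin a → ℂ) :
    ∑ i : Fin a, eVec a (a - 1) i * g i = g ⟨a - 1, by omega⟩ := by
  rw [Finset.sum_eq_single (⟨a - 1, by omega⟩ : Fin a)]
  · simp [eVec]
  · intro b _ hb
    have hb' : (b : ℕ) ≠ a - 1 := fun h => hb (Fin.ext h)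
    simp [eVec, hb']
  · simp

lemma inL2_entry {d n : ℕ} {Pc : Fin (d + 1) → Matrix (Fin n) (Fin n) ℂ}
    {X Y : Matrix (Fin d × Fin n) (Fin d × Fin n) ℂ} {s : Fin d → ℂ}
    (h : InL2 Pc X Y s) (lam : ℂ) (p : Fin n) (b : Fin d) (t : Fin n) :
    ∑ a : Fin d, Lam d lam a * (lam • X + Y) (a, p) (b, t)
      = s b * polyEval Pc lam p t := by
  have h0 := congrFun (congrFun (h lam) p) (b, t)
  simpa [Matrix.mul_apply, rKron, Fintype.sum_prod_type, Matrix.one_apply,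
    mul_ite, ite_mul, mul_one, mul_zero, zero_mul] using h0

/-- left-eigenvector recovery for pencils in `𝕃₂(G)`: for `λ` with
`det A(λ) ≠ 0` and `𝕃 ∈ 𝕃₂(G)` with ansatz vectors `(s, z)`, `z ≠ 0`:
(i) `y^* G(λ) = 0 ↔ u(y)^* 𝕃(λ) = 0`; (ii) `y ↦ u(y)` is linear and injective, and in
particular `u(y) ≠ 0` whenever `y ≠ 0`. -/
theorem stmt11 {m k n r : ℕ} (hm : 1 ≤ m) (hk : 1 ≤ k) (hn : 1 ≤ n) (hr : 1 ≤ r)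
    (Ac : Fin (m + 1) → Matrix (Fin n) (Fin n) ℂ)
    (Dc : Fin (k + 1) → Matrix (Fin r) (Fin r) ℂ)
    (B : Matrix (Fin n) (Fin r) ℂ) (C : Matrix (Fin r) (Fin n) ℂ)
    (lam : ℂ) (hdet : (polyEval Ac lam).det ≠ 0)
    (XX YY : Matrix ((Fin m × Fin n) ⊕ (Fin k × Fin r)) ((Fin m × Fin n) ⊕ (Fin k × Fin r)) ℂ)
    (s : Fin m → ℂ) (z : Fin k → ℂ) (hz : z ≠ 0)
    (hL : InBL2 Ac Dc B C XX YY s z) :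
    (∀ y : Fin r → ℂ,
        star y ᵥ* Gmat Ac Dc B C lam = 0 ↔
          star (uvec m k Ac C lam y) ᵥ* (lam • XX + YY) = 0) ∧
    (∀ (a : ℂ) (y y' : Fin r → ℂ),
        uvec m k Ac C lam (a • y + y') = a • uvec m k Ac C lam y + uvec m k Ac C lam y') ∧
    (∀ y y' : Fin r → ℂ, uvec m k Ac C lam y = uvec m k Ac C lam y' → y = y') ∧
    (∀ y : Fin r → ℂ, y ≠ 0 → uvec m k Ac C lam y ≠ 0) := by
  obtain ⟨X, Y, P, Q, hX, hP, hXX, hYY⟩ := hL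
  subst hXX hYY
  set A := polyEval Ac lam with hA
  have hAu : IsUnit A.det := isUnit_iff_ne_zero.mpr hdet
  have hAinv : A⁻¹ * A = 1 := Matrix.nonsing_inv_mul A hAu
  -- the conjugated first block
  have hW : ∀ (y : Fin r → ℂ) (p : Fin n),
      star (((-(C * A⁻¹))ᴴ *ᵥ y) p) = (star y ᵥ* (-(C * A⁻¹))) p := by
    intro y p
    have := congrFun (Matrix.star_mulVec (M := (-(C * A⁻¹))ᴴ) (v := y)) p
    simpa using this
  have key : ∀ y : Fin r → ℂ,
      star (uvec m k Ac C lam y) ᵥ*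
        (lam • Matrix.fromBlocks X 0 0 P +
          Matrix.fromBlocks Y (-(oKron (eVec m (m - 1)) z B)) (oKron (eVec k (k - 1)) s C) Q)
      = Sum.elim (0 : Fin m × Fin n → ℂ)
          (fun ct => z ct.1 * (star y ᵥ* Gmat Ac Dc B C lam) ct.2) := by
    intro y
    set q : Fin n → ℂ := star y ᵥ* (-(C * A⁻¹)) with hq
    have hqA : q ᵥ* A = -(star y ᵥ* C) := by
      rw [hq, Matrix.vecMul_vecMul]
      rw [show (-(C * A⁻¹)) * A = -C by
        rw [Matrix.neg_mul, Matrix.mul_assoc, hAinv, Matrix.mul_one]]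
      simp [Matrix.vecMul_neg]
    have hqB : q ᵥ* B = -(star y ᵥ* (C * A⁻¹ * B)) := by
      rw [hq, Matrix.vecMul_vecMul]
      rw [show (-(C * A⁻¹)) * B = -(C * A⁻¹ * B) by rw [Matrix.neg_mul]]
      simp [Matrix.vecMul_neg]
    funext col
    have expand : ∀ (i : (Fin m × Fin n) ⊕ (Fin k × Fin r)),
        star (uvec m k Ac C lam y) i =
          Sum.elim (fun ap : Fin m × Fin n => Lam m lam ap.1 * q ap.2)
            (fun cs : Fin k × Fin r => Lam k lam cs.1 * star (y cs.2)) i := by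
      rintro (⟨a, p⟩ | ⟨c, j⟩)
      · simp only [uvec, Pi.star_apply, Sum.elim_inl, star_mul']
        rw [← hA, hq]
        rw [← hW y p]
        simp [mul_comm]
      · simp [uvec, mul_comm]
    simp only [Matrix.vecMul, dotProduct]
    rw [Finset.sum_congr rfl (fun i _ => by rw [expand i])]
    rcases col with ⟨b, t⟩ | ⟨c, t⟩
    · -- left block column: result is 0
      rw [Fintype.sum_sum_type]
      have h1 : ∑ ap : Fin m × Fin n,
          Sum.elim (fun ap : Fin m × Fin n => Lam m lam ap.1 * q ap.2)
            (fun cs : Fin k × Fin r => Lam k lam cs.1 * star (y cs.2)) (Sum.inl ap) *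
          (lam • Matrix.fromBlocks X 0 0 P +
            Matrix.fromBlocks Y (-(oKron (eVec m (m - 1)) z B)) (oKron (eVec k (k - 1)) s C) Q)
            (Sum.inl ap) (Sum.inl (b, t))
          = s b * (q ᵥ* A) t := by
        simp only [Sum.elim_inl, Matrix.add_apply, Matrix.smul_apply,
          Matrix.fromBlocks_apply₁₁, smul_eq_mul]
        rw [Fintype.sum_prod_type]
        rw [Finset.sum_comm]
        have : ∀ p : Fin n, ∑ a : Fin m,
            Lam m lam a * q p * (lam * X (a, p) (b, t) + Y (a, p) (b, t))
            = q p * (s b * A p t) := by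
          intro p
          rw [← inL2_entry hX lam p b t, Finset.mul_sum]
          refine Finset.sum_congr rfl fun a _ => ?_
          simp only [Matrix.add_apply, Matrix.smul_apply, smul_eq_mul]
          ring
        rw [Finset.sum_congr rfl fun p _ => this p]
        simp only [Matrix.vecMul, dotProduct, Finset.mul_sum]
        exact Finset.sum_congr rfl fun p _ => by ring
      have h2 : ∑ cs : Fin k × Fin r,
          Sum.elim (fun ap : Fin m × Fin n => Lam m lam ap.1 * q ap.2)
            (fun cs : Fin k × Fin r => Lam k lam cs.1 * star (y cs.2)) (Sum.inr cs) *
          (lam • Matrix.fromBlocks X 0 0 P +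
            Matrix.fromBlocks Y (-(oKron (eVec m (m - 1)) z B)) (oKron (eVec k (k - 1)) s C) Q)
            (Sum.inr cs) (Sum.inl (b, t))
          = s b * (star y ᵥ* C) t := by
        simp only [Sum.elim_inr, Matrix.add_apply, Matrix.smul_apply,
          Matrix.fromBlocks_apply₂₁, Matrix.zero_apply, smul_eq_mul, mul_zero, zero_add,
          oKron]
        rw [Fintype.sum_prod_type]
        have hc : ∑ c : Fin k, ∑ j : Fin r,
            Lam k lam c * star (y j) * (eVec k (k - 1) c * s b * C j t)
            = (∑ c : Fin k, eVec k (k - 1) c * Lam k lam c) *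
              (s b * ∑ j : Fin r, star (y j) * C j t) := by
          rw [Finset.sum_mul]
          refine Finset.sum_congr rfl fun c _ => ?_
          simp only [Finset.mul_sum]
          exact Finset.sum_congr rfl fun j _ => by ring
        rw [hc, sum_eVec_mul hk, lam_last hk, one_mul]
        simp [Matrix.vecMul, dotProduct]
      rw [h1, h2, hqA]
      simp only [Sum.elim_inl, Pi.zero_apply, Pi.neg_apply]
      ring
    · -- right block column
      rw [Fintype.sum_sum_type]
      have h1 : ∑ ap : Fin m × Fin n,
          Sum.elim (fun ap : Fin m × Fin n => Lam m lam ap.1 * q ap.2)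
            (fun cs : Fin k × Fin r => Lam k lam cs.1 * star (y cs.2)) (Sum.inl ap) *
          (lam • Matrix.fromBlocks X 0 0 P +
            Matrix.fromBlocks Y (-(oKron (eVec m (m - 1)) z B)) (oKron (eVec k (k - 1)) s C) Q)
            (Sum.inl ap) (Sum.inr (c, t))
          = -(z c * (q ᵥ* B) t) := by
        simp only [Sum.elim_inl, Matrix.add_apply, Matrix.smul_apply,
          Matrix.fromBlocks_apply₁₂, Matrix.zero_apply, smul_eq_mul, mul_zero, zero_add,
          Matrix.neg_apply, oKron]
        rw [Fintype.sum_prod_type]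
        have ha : ∑ a : Fin m, ∑ p : Fin n,
            Lam m lam a * q p * -(eVec m (m - 1) a * z c * B p t)
            = -((∑ a : Fin m, eVec m (m - 1) a * Lam m lam a) *
              (z c * ∑ p : Fin n, q p * B p t)) := by
          rw [Finset.sum_mul, ← Finset.sum_neg_distrib]
          refine Finset.sum_congr rfl fun a _ => ?_
          simp only [Finset.mul_sum, ← Finset.sum_neg_distrib]
          exact Finset.sum_congr rfl fun p _ => by ring
        rw [ha, sum_eVec_mul hm, lam_last hm, one_mul]
        simp [Matrix.vecMul, dotProduct]
      have h2 : ∑ cs : Fin k × Fin r,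
          Sum.elim (fun ap : Fin m × Fin n => Lam m lam ap.1 * q ap.2)
            (fun cs : Fin k × Fin r => Lam k lam cs.1 * star (y cs.2)) (Sum.inr cs) *
          (lam • Matrix.fromBlocks X 0 0 P +
            Matrix.fromBlocks Y (-(oKron (eVec m (m - 1)) z B)) (oKron (eVec k (k - 1)) s C) Q)
            (Sum.inr cs) (Sum.inr (c, t))
          = z c * (star y ᵥ* polyEval Dc lam) t := by
        simp only [Sum.elim_inr, Matrix.add_apply, Matrix.smul_apply,
          Matrix.fromBlocks_apply₂₂, smul_eq_mul]
        rw [Fintype.sum_prod_type, Finset.sum_comm]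
        have : ∀ j : Fin r, ∑ c' : Fin k,
            Lam k lam c' * star (y j) * (lam * P (c', j) (c, t) + Q (c', j) (c, t))
            = star (y j) * (z c * polyEval Dc lam j t) := by
          intro j
          rw [← inL2_entry hP lam j c t, Finset.mul_sum]
          refine Finset.sum_congr rfl fun c' _ => ?_
          simp only [Matrix.add_apply, Matrix.smul_apply, smul_eq_mul]
          ring
        rw [Finset.sum_congr rfl fun j _ => this j]
        simp only [Matrix.vecMul, dotProduct, Finset.mul_sum, Pi.star_apply]
        exact Finset.sum_congr rfl fun j _ => by ring
      rw [h1, h2, hqB]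
      simp only [Sum.elim_inr]
      have hG : ∑ x : Fin r, star y x * Gmat Ac Dc B C lam x t
          = (star y ᵥ* polyEval Dc lam) t + (star y ᵥ* (C * A⁻¹ * B)) t := by
        have hh := congrFun (Matrix.vecMul_add (polyEval Dc lam) (C * A⁻¹ * B) (star y)) t
        simpa [Gmat, ← hA, Matrix.vecMul, dotProduct] using hh
      rw [hG]
      simp only [Pi.neg_apply]
      ring
  refine ⟨?_, ?_, ?_, ?_⟩
  · intro y
    rw [key y]
    constructor
    · intro h
      funext col
      rcases col with ap | ct
      · simp
      · simp [congrFun h ct.2]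
    · intro h
      obtain ⟨c0, hc0⟩ := Function.ne_iff.mp hz
      funext t
      have := congrFun h (Sum.inr (c0, t))
      simp only [Sum.elim_inr, Pi.zero_apply] at this
      rcases mul_eq_zero.mp this with h' | h'
      · exact absurd h' hc0
      · simpa using h'
  · intro a y y'
    funext i
    rcases i with ⟨ai, p⟩ | ⟨c, j⟩
    · simp only [uvec, Sum.elim_inl, Matrix.mulVec_add, Matrix.mulVec_smul,
        Pi.add_apply, Pi.smul_apply, smul_eq_mul]
      ring
    · simp only [uvec, Sum.elim_inr, Pi.add_apply, Pi.smul_apply, smul_eq_mul]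
      ring
  · intro y y' h
    funext j
    have := congrFun h (Sum.inr (⟨k - 1, by omega⟩, j))
    simpa [uvec, lam_last hk] using this
  · intro y hy h0
    apply hy
    funext j
    have := congrFun h0 (Sum.inr (⟨k - 1, by omega⟩, j))
    simpa [uvec, lam_last hk] using this
end
end

section
/- Assume B ≠ 0 and C ≠ 0. If an (mn+kr)×(mn+kr) pencil 𝕃(λ) is in 𝕃₁(G) with ansatz vectors (v, w) and is also in 𝕃₂(G) with ansatz vectors (s, z), then there exist scalars α, β ∈ ℂ such that v = α e_m, z = α e_k, w = β e_k, and s = β e_m. -/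
open Matrix Finset

noncomputable section

/-- if `B ≠ 0`, `C ≠ 0` and the pencil `λ𝕏 + 𝕐` is simultaneously in `𝕃₁(G)`
with ansatz vectors `(v, w)` and in `𝕃₂(G)` with ansatz vectors `(s, z)`, then there are
scalars `α, β` with `v = α e_m`, `z = α e_k`, `w = β e_k`, `s = β e_m`. -/
theorem stmt14 {m k n r : ℕ} (hm : 1 ≤ m) (hk : 1 ≤ k) (hn : 1 ≤ n) (hr : 1 ≤ r)
    (Ac : Fin (m + 1) → Matrix (Fin n) (Fin n) ℂ)
    (Dc : Fin (k + 1) → Matrix (Fin r) (Fin r) ℂ)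
    (B : Matrix (Fin n) (Fin r) ℂ) (C : Matrix (Fin r) (Fin n) ℂ)
    (hB : B ≠ 0) (hC : C ≠ 0)
    (XX YY : Matrix ((Fin m × Fin n) ⊕ (Fin k × Fin r)) ((Fin m × Fin n) ⊕ (Fin k × Fin r)) ℂ)
    (v : Fin m → ℂ) (w : Fin k → ℂ) (s : Fin m → ℂ) (z : Fin k → ℂ)
    (h1 : InBL1 Ac Dc B C XX YY v w) (h2 : InBL2 Ac Dc B C XX YY s z) :
    ∃ α β : ℂ, v = α • eVec m (m - 1) ∧ z = α • eVec k (k - 1) ∧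
      w = β • eVec k (k - 1) ∧ s = β • eVec m (m - 1) := by

  obtain ⟨X, Y, P, Q, _, _, hXX, hYY⟩ := h1
  obtain ⟨X', Y', P', Q', _, _, hXX', hYY'⟩ := h2
  -- find nonzero entries of B and C
  have hBe : ∃ i j, B i j ≠ 0 := by
    by_contra h; push_neg at h; exact hB (by ext i j; simp [h])
  have hCe : ∃ i j, C i j ≠ 0 := by
    by_contra h; push_neg at h; exact hC (by ext i j; simp [h])
  obtain ⟨i0, j0, hB0⟩ := hBe
  obtain ⟨i1, j1, hC0⟩ := hCe
  have hEq := hYY.symm.trans hYY'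
  set em : Fin m := ⟨m - 1, by omega⟩ with hem
  set ek : Fin k := ⟨k - 1, by omega⟩ with hek
  have hemv : eVec m (m - 1) em = 1 := by simp [eVec, hem]
  have hekv : eVec k (k - 1) ek = 1 := by simp [eVec, hek]
  -- off-diagonal (inl, inr) entries
  have h12 : ∀ (a : Fin m) (b : Fin k), v a * eVec k (k - 1) b = eVec m (m - 1) a * z b := by
    intro a b
    have := congrFun (congrFun hEq (Sum.inl (a, i0))) (Sum.inr (b, j0))
    simp only [Matrix.fromBlocks_apply₁₂, Matrix.neg_apply, oKron, neg_inj] at this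
    exact mul_right_cancel₀ hB0 this
  have h21 : ∀ (a : Fin k) (b : Fin m), w a * eVec m (m - 1) b = eVec k (k - 1) a * s b := by
    intro a b
    have := congrFun (congrFun hEq (Sum.inr (a, i1))) (Sum.inl (b, j1))
    simp only [Matrix.fromBlocks_apply₂₁, oKron] at this
    exact mul_right_cancel₀ hC0 this
  refine ⟨v em, w ek, ?_, ?_, ?_, ?_⟩
  · funext a
    have h1 := h12 a ek
    have h2 := h12 em ek
    simp only [hekv, hemv, mul_one, one_mul] at h1 h2
    simp only [Pi.smul_apply, smul_eq_mul]
    rw [h1, ← h2]; ring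
  · funext b
    have h1 := h12 em b
    rw [hemv, one_mul] at h1
    simp only [Pi.smul_apply, smul_eq_mul]
    rw [← h1]
  · funext a
    have h1 := h21 a em
    have h2 := h21 ek em
    simp only [hemv, hekv, mul_one, one_mul] at h1 h2
    simp only [Pi.smul_apply, smul_eq_mul]
    rw [h1, ← h2]; ring
  · funext b
    have h1 := h21 ek b
    rw [hekv, one_mul] at h1
    simp only [Pi.smul_apply, smul_eq_mul]
    rw [← h1]
end
end

section
/- Assume the system is Hermitian: A_j* = A_j for all 0 ≤ j ≤ m, D_j* = D_j for all 0 ≤ j ≤ k, and C = B*, where * denotes the conjugate transpose (so that G(λ)* = G(conj(λ)) whenever det A(λ) ≠ 0). Let 𝕃(λ) = λ𝕏 + 𝕐 be an (mn+kr)×(mn+kr) pencil with 𝕏* = 𝕏 and 𝕐* = 𝕐, and let w ∈ ℂ^k be such that for every λ ∈ ℂ with det A(λ) ≠ 0, 𝕃(λ) · [Λ_{m-1}(λ) ⊗ (A(λ)^{-1} B); Λ_{k-1}(λ) ⊗ I_r] = [0; w ⊗ G(λ)]. Then for every λ ∈ ℂ with det A(λ) ≠ 0, [Λ_{m-1}(λ)ᵀ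 ⊗ (C A(λ)^{-1}), Λ_{k-1}(λ)ᵀ ⊗ I_r] · 𝕃(λ) = [0, conj(w)ᵀ ⊗ G(λ)], where conj(w) is the entrywise complex conjugate of w. -/
open Matrix Finset

noncomputable section

lemma polyEval_conj {d n : ℕ} (Pc : Fin (d + 1) → Matrix (Fin n) (Fin n) ℂ)
    (hP : ∀ j, (Pc j)ᴴ = Pc j) (lam : ℂ) :
    (polyEval Pc (starRingEnd ℂ lam))ᴴ = polyEval Pc lam := by
  unfold polyEval
  simp only [Matrix.conjTranspose_sum, Matrix.conjTranspose_smul, hP, star_pow]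
  simp

lemma Lam_conj (p : ℕ) (lam : ℂ) : star (Lam p (starRingEnd ℂ lam)) = Lam p lam := by
  funext i
  simp [Lam, Pi.star_apply, ← map_pow]

lemma vKron_conjT {a : ℕ} {α β : Type*} (v : Fin a → ℂ) (M : Matrix α β ℂ) :
    (vKron v M)ᴴ = rKron (star v) Mᴴ := by
  ext j i
  simp [vKron, rKron, Matrix.conjTranspose_apply]
/-- for a Hermitian system (`A_j* = A_j`, `D_j* = D_j`, `C = B*`), if the pencil
`𝕃(λ) = λ𝕏 + 𝕐` is Hermitian and satisfies the right ansatz identity with vector `w`, then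
`[Λ_{m-1}(λ)ᵀ ⊗ (C A(λ)⁻¹), Λ_{k-1}(λ)ᵀ ⊗ I_r] ⬝ 𝕃(λ) = [0, conj(w)ᵀ ⊗ G(λ)]`. -/
theorem stmt16 {m k n r : ℕ} (hm : 1 ≤ m) (hk : 1 ≤ k) (hn : 1 ≤ n) (hr : 1 ≤ r)
    (Ac : Fin (m + 1) → Matrix (Fin n) (Fin n) ℂ)
    (Dc : Fin (k + 1) → Matrix (Fin r) (Fin r) ℂ)
    (B : Matrix (Fin n) (Fin r) ℂ) (C : Matrix (Fin r) (Fin n) ℂ)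
    (hAher : ∀ j, (Ac j)ᴴ = Ac j) (hDher : ∀ j, (Dc j)ᴴ = Dc j) (hCB : C = Bᴴ)
    (XX YY : Matrix ((Fin m × Fin n) ⊕ (Fin k × Fin r)) ((Fin m × Fin n) ⊕ (Fin k × Fin r)) ℂ)
    (hX : XXᴴ = XX) (hY : YYᴴ = YY) (w : Fin k → ℂ)
    (h : ∀ lam : ℂ, (polyEval Ac lam).det ≠ 0 →
      (lam • XX + YY) *
          Matrix.fromRows (vKron (Lam m lam) ((polyEval Ac lam)⁻¹ * B))
            (vKron (Lam k lam) (1 : Matrix (Fin r) (Fin r) ℂ))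
        = Matrix.fromRows 0 (vKron w (Gmat Ac Dc B C lam))) :
    ∀ lam : ℂ, (polyEval Ac lam).det ≠ 0 →
      Matrix.fromCols (rKron (Lam m lam) (C * (polyEval Ac lam)⁻¹))
          (rKron (Lam k lam) (1 : Matrix (Fin r) (Fin r) ℂ)) * (lam • XX + YY)
        = Matrix.fromCols 0 (rKron (star w) (Gmat Ac Dc B C lam)) := by
  intro lam hdet
  set lam' := starRingEnd ℂ lam with hlam'
  have hA : (polyEval Ac lam')ᴴ = polyEval Ac lam := polyEval_conj Ac hAher lam
  have hD : (polyEval Dc lam')ᴴ = polyEval Dc lam := polyEval_conj Dc hDher lam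
  have hdet' : (polyEval Ac lam').det ≠ 0 := by
    intro h0
    apply hdet
    rw [← hA, Matrix.det_conjTranspose, h0, star_zero]
  have hinv : ((polyEval Ac lam')⁻¹)ᴴ = (polyEval Ac lam)⁻¹ := by
    rw [Matrix.conjTranspose_nonsing_inv, hA]
  have hG : (Gmat Ac Dc B C lam')ᴴ = Gmat Ac Dc B C lam := by
    unfold Gmat
    rw [Matrix.conjTranspose_add, hD, Matrix.conjTranspose_mul, Matrix.conjTranspose_mul,
      hinv, hCB]
    simp only [Matrix.conjTranspose_conjTranspose]
    rw [← Matrix.mul_assoc]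
  have H := congrArg Matrix.conjTranspose (h lam' hdet')
  rw [Matrix.conjTranspose_mul, Matrix.conjTranspose_fromRows_eq_fromCols_conjTranspose,
    Matrix.conjTranspose_fromRows_eq_fromCols_conjTranspose]
    at H
  rw [vKron_conjT, vKron_conjT, Matrix.conjTranspose_add, Matrix.conjTranspose_smul,
    hX, hY] at H
  have hstar : star lam' = lam := by simp [hlam']
  rw [hstar] at H
  rw [Matrix.conjTranspose_mul, hinv, Matrix.conjTranspose_one, Lam_conj, Lam_conj, ← hCB,
    Matrix.conjTranspose_zero] at H
  rw [vKron_conjT, hG] at H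
  exact H
end
end
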